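/- The dual function θ(y, z) = (1/2)‖max(C + y𝐞ᵀ + 𝐞zᵀ, 0)‖_F² − ⟨y + z, 𝐞⟩ is differentiable, with gradient given by ∇_y θ = max(C + y𝐞ᵀ + 𝐞zᵀ, 0)𝐞 − 𝐞 and ∇_z θ = max(C + y𝐞ᵀ + 𝐞zᵀ, 0)ᵀ𝐞 − 𝐞. -/

import Mathlib

open Finset Matrix

/-- Frobenius norm of a square real matrix. -/
noncomputable def frob {n : ℕ} (M : Matrix (Fin n) (Fin n) ℝ) : ℝ :=
  Real.sqrt (∑ i, ∑ j, (M i j) ^ 2)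

/-- `X` is doubly stochastic. -/
def IsDS {n : ℕ} (X : Matrix (Fin n) (Fin n) ℝ) : Prop :=
  (∀ i j, 0 ≤ X i j) ∧ (∀ i, ∑ j, X i j = 1) ∧ (∀ j, ∑ i, X i j = 1)

/-- `X` is a permutation matrix. -/
def IsPermMat {n : ℕ} (X : Matrix (Fin n) (Fin n) ℝ) : Prop :=
  (∀ i j, X i j = 0 ∨ X i j = 1) ∧ (∀ i, ∑ j, X i j = 1) ∧ (∀ j, ∑ i, X i j = 1)

lemma hasDerivAt_maxsq (t : ℝ) : HasDerivAt (fun x : ℝ => max x 0 ^ 2) (2 * max t 0) t := by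
  rcases lt_trichotomy t 0 with h | h | h
  · rw [max_eq_right h.le, mul_zero]
    have he : (fun x : ℝ => max x 0 ^ 2) =ᶠ[nhds t] fun _ => 0 := by
      filter_upwards [eventually_lt_nhds h] with x hx
      simp [max_eq_right hx.le]
    exact (hasDerivAt_const t (0:ℝ)).congr_of_eventuallyEq he
  · subst h
    rw [max_self, mul_zero]
    rw [hasDerivAt_iff_isLittleO]
    rw [Asymptotics.isLittleO_iff]
    intro c hc
    filter_upwards [eventually_abs_sub_lt 0 hc] with x hx
    rw [sub_zero] at hx
    have h1 : max x 0 ^ 2 ≤ |x| * |x| := by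
      rcases le_or_gt x 0 with hx0 | hx0
      · rw [max_eq_right hx0]
        simp only [ne_eq, OfNat.ofNat_ne_zero, not_false_eq_true, zero_pow]
        positivity
      · rw [max_eq_left hx0.le, sq, ← abs_mul_abs_self x]
    have h2 : ‖max x 0 ^ 2 - max (0:ℝ) 0 ^ 2 - (x - 0) • (0:ℝ)‖ = max x 0 ^ 2 := by
      simp only [max_self, ne_eq, OfNat.ofNat_ne_zero, not_false_eq_true, zero_pow,
        sub_zero, smul_zero, Real.norm_eq_abs]
      rw [abs_of_nonneg]; positivity
    rw [h2]
    calc max x 0 ^ 2 ≤ |x| * |x| := h1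
      _ ≤ c * |x| := mul_le_mul_of_nonneg_right hx.le (abs_nonneg _)
      _ = c * ‖x - 0‖ := by rw [sub_zero, Real.norm_eq_abs]
  · have he : (fun x : ℝ => max x 0 ^ 2) =ᶠ[nhds t] fun x => x ^ 2 := by
      filter_upwards [eventually_gt_nhds h] with x hx
      simp [max_eq_left hx.le]
    have h2 := (hasDerivAt_pow 2 t).congr_of_eventuallyEq he
    simpa [max_eq_left h.le] using h2

theorem stmt_18 {n : ℕ} (C : Matrix (Fin n) (Fin n) ℝ) (y z : Fin n → ℝ) :
    DifferentiableAt ℝ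
      (fun p : (Fin n → ℝ) × (Fin n → ℝ) =>
        (1 / 2) * frob (Matrix.of fun i j => max (C i j + p.1 i + p.2 j) 0) ^ 2 -
          ∑ i, (p.1 i + p.2 i)) (y, z) ∧
    ∀ u v : Fin n → ℝ,
      fderiv ℝ
        (fun p : (Fin n → ℝ) × (Fin n → ℝ) =>
          (1 / 2) * frob (Matrix.of fun i j => max (C i j + p.1 i + p.2 j) 0) ^ 2 -
            ∑ i, (p.1 i + p.2 i)) (y, z) (u, v) =
        (∑ i, ((∑ j, max (C i j + y i + z j) 0) - 1) * u i) +
          ∑ j, ((∑ i, max (C i j + y i + z j) 0) - 1) * v j := by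
  classical
  set E := (Fin n → ℝ) × (Fin n → ℝ)
  let P1 : ∀ i : Fin n, E →L[ℝ] ℝ := fun i =>
    (ContinuousLinearMap.proj i).comp (ContinuousLinearMap.fst ℝ (Fin n → ℝ) (Fin n → ℝ))
  let P2 : ∀ j : Fin n, E →L[ℝ] ℝ := fun j =>
    (ContinuousLinearMap.proj j).comp (ContinuousLinearMap.snd ℝ (Fin n → ℝ) (Fin n → ℝ))
  let m : Fin n → Fin n → ℝ := fun i j => max (C i j + y i + z j) 0
  let D : E →L[ℝ] ℝ :=
    (1/2 : ℝ) • (∑ i, ∑ j, (2 * m i j) • (P1 i + P2 j)) - ∑ i, (P1 i + P2 i)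
  have hA : ∀ i j : Fin n, HasFDerivAt (fun p : E => C i j + p.1 i + p.2 j)
      (P1 i + P2 j) (y, z) := by
    intro i j
    have h1 : HasFDerivAt (fun p : E => p.1 i) (P1 i) (y, z) := (P1 i).hasFDerivAt
    have h2 : HasFDerivAt (fun p : E => p.2 j) (P2 j) (y, z) := (P2 j).hasFDerivAt
    have := (h1.add h2).const_add (C i j)
    simpa [add_assoc] using this
  have hterm : ∀ i j : Fin n,
      HasFDerivAt (fun p : E => max (C i j + p.1 i + p.2 j) 0 ^ 2)
        ((2 * m i j) • (P1 i + P2 j)) (y, z) := fun i j =>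
    (by
      have := HasDerivAt.comp_hasFDerivAt (h₂ := fun x : ℝ => max x 0 ^ 2) (y, z)
        (hasDerivAt_maxsq (C i j + y i + z j)) (hA i j)
      exact this)
  have hsum : HasFDerivAt (fun p : E => ∑ i, ∑ j, max (C i j + p.1 i + p.2 j) 0 ^ 2)
      (∑ i, ∑ j, (2 * m i j) • (P1 i + P2 j)) (y, z) :=
    HasFDerivAt.fun_sum fun i _ => HasFDerivAt.fun_sum fun j _ => hterm i j
  have hlin : HasFDerivAt (fun p : E => ∑ i, (p.1 i + p.2 i)) (∑ i, (P1 i + P2 i)) (y, z) :=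
    HasFDerivAt.fun_sum fun i _ => ((P1 i).hasFDerivAt.add (P2 i).hasFDerivAt)
  have htot : HasFDerivAt
      (fun p : E => (1/2 : ℝ) * (∑ i, ∑ j, max (C i j + p.1 i + p.2 j) 0 ^ 2)
        - ∑ i, (p.1 i + p.2 i)) D (y, z) := (hsum.const_mul _).sub hlin
  have hFeq : (fun p : E =>
        (1 / 2) * frob (Matrix.of fun i j => max (C i j + p.1 i + p.2 j) 0) ^ 2 -
          ∑ i, (p.1 i + p.2 i)) =
      (fun p : E => (1/2 : ℝ) * (∑ i, ∑ j, max (C i j + p.1 i + p.2 j) 0 ^ 2)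
        - ∑ i, (p.1 i + p.2 i)) := by
    funext p
    have hnn : (0:ℝ) ≤ ∑ i, ∑ j, max (C i j + p.1 i + p.2 j) 0 ^ 2 :=
      Finset.sum_nonneg fun i _ => Finset.sum_nonneg fun j _ => sq_nonneg _
    simp only [frob, Matrix.of_apply]
    rw [Real.sq_sqrt hnn]
  have htot' : HasFDerivAt
      (fun p : E =>
        (1 / 2) * frob (Matrix.of fun i j => max (C i j + p.1 i + p.2 j) 0) ^ 2 -
          ∑ i, (p.1 i + p.2 i)) D (y, z) := hFeq ▸ htot
  refine ⟨htot'.differentiableAt, fun u v => ?_⟩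
  rw [htot'.fderiv]
  have hD : D (u, v) = (1/2 : ℝ) * (∑ i, ∑ j, 2 * m i j * (u i + v j))
      - ∑ i, (u i + v i) := by
    simp [D, P1, P2, ContinuousLinearMap.sum_apply, mul_add,
      ContinuousLinearMap.coe_fst', ContinuousLinearMap.coe_snd']
    rfl
  rw [hD]
  have e1 : (1/2 : ℝ) * (∑ i, ∑ j, 2 * m i j * (u i + v j)) =
      (∑ i, ∑ j, m i j * u i) + ∑ i, ∑ j, m i j * v j := by
    rw [Finset.mul_sum, ← Finset.sum_add_distrib]
    refine Finset.sum_congr rfl fun i _ => ?_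
    rw [Finset.mul_sum, ← Finset.sum_add_distrib]
    refine Finset.sum_congr rfl fun j _ => ?_
    ring
  rw [e1]
  have e2 : (∑ i, ∑ j, m i j * u i) = ∑ i, (∑ j, m i j) * u i := by
    refine Finset.sum_congr rfl fun i _ => ?_
    rw [Finset.sum_mul]
  have e3 : (∑ i, ∑ j, m i j * v j) = ∑ j, (∑ i, m i j) * v j := by
    rw [Finset.sum_comm]
    refine Finset.sum_congr rfl fun j _ => ?_
    rw [Finset.sum_mul]
  rw [e2, e3]
  have e4 : (∑ i, ((∑ j, max (C i j + y i + z j) 0) - 1) * u i) =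
      (∑ i, (∑ j, m i j) * u i) - ∑ i, u i := by
    rw [← Finset.sum_sub_distrib]
    refine Finset.sum_congr rfl fun i _ => ?_
    simp [m, sub_mul]
  have e5 : (∑ j, ((∑ i, max (C i j + y i + z j) 0) - 1) * v j) =
      (∑ j, (∑ i, m i j) * v j) - ∑ j, v j := by
    rw [← Finset.sum_sub_distrib]
    refine Finset.sum_congr rfl fun j _ => ?_
    simp [m, sub_mul]
  rw [e4, e5, Finset.sum_add_distrib]
  ring
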